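/- arXiv:2102.09101 — 5 statements merged into one kernel-verified Lean document; each statement's English description precedes it below -/
import Mathlib

section
/- Let C be a nonempty finite subset of ℝ^d with centroid μ = (1/|C|)·∑_{x∈C} x, and write L(C) = L(C, {μ}). Let k ≥ 1 be an integer and A ≥ 0 a real number. If a point x ∈ ℝ^d satisfies ‖x − μ‖ ≤ √(2·L(C)/|C|) + √(A/(k·|C|)), then L(C, {x}) ≤ 5·L(C) + 2A/k. -/
/-- The k-means cost `L(X, S) = ∑_{x∈X} min_{c∈S} ‖x − c‖²`. -/
noncomputable def kmeansCost {d : ℕ} (X S : Finset (EuclideanSpace ℝ (Fin d))) : ℝ :=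
  ∑ x ∈ X, sInf ((fun c => ‖x - c‖ ^ 2) '' (S : Set (EuclideanSpace ℝ (Fin d))))

lemma kmeansCost_singleton {d : ℕ} (X : Finset (EuclideanSpace ℝ (Fin d)))
    (c : EuclideanSpace ℝ (Fin d)) :
    kmeansCost X {c} = ∑ x ∈ X, ‖x - c‖ ^ 2 := by
  unfold kmeansCost
  simp

open RealInnerProductSpace in
lemma parallel_axis {d : ℕ} (C : Finset (EuclideanSpace ℝ (Fin d)))
    (hC : C.Nonempty) (μ : EuclideanSpace ℝ (Fin d))
    (hμ : μ = (C.card : ℝ)⁻¹ • ∑ x ∈ C, x) (x : EuclideanSpace ℝ (Fin d)) :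
    ∑ y ∈ C, ‖y - x‖ ^ 2 = (∑ y ∈ C, ‖y - μ‖ ^ 2) + (C.card : ℝ) * ‖x - μ‖ ^ 2 := by
  have hn : (C.card : ℝ) ≠ 0 := by
    exact_mod_cast (Finset.card_pos.mpr hC).ne'
  have hsum : ∑ y ∈ C, y = (C.card : ℝ) • μ := by
    rw [hμ, smul_smul, mul_inv_cancel₀ hn, one_smul]
  have key : ∀ y : EuclideanSpace ℝ (Fin d),
      ‖y - x‖ ^ 2 = ‖y - μ‖ ^ 2 + 2 * ⟪y - μ, μ - x⟫ + ‖μ - x‖ ^ 2 := by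
    intro y
    have : y - x = (y - μ) + (μ - x) := by abel
    rw [this, norm_add_sq_real]
  calc ∑ y ∈ C, ‖y - x‖ ^ 2
      = ∑ y ∈ C, (‖y - μ‖ ^ 2 + 2 * ⟪y - μ, μ - x⟫ + ‖μ - x‖ ^ 2) := by
        exact Finset.sum_congr rfl fun y _ => key y
    _ = (∑ y ∈ C, ‖y - μ‖ ^ 2) + 2 * ⟪∑ y ∈ C, (y - μ), μ - x⟫
        + (C.card : ℝ) * ‖μ - x‖ ^ 2 := by
        rw [Finset.sum_add_distrib, Finset.sum_add_distrib, sum_inner,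
          Finset.sum_const, nsmul_eq_mul, ← Finset.mul_sum]
    _ = (∑ y ∈ C, ‖y - μ‖ ^ 2) + (C.card : ℝ) * ‖x - μ‖ ^ 2 := by
        have : ∑ y ∈ C, (y - μ) = 0 := by
          rw [Finset.sum_sub_distrib, hsum, Finset.sum_const, ← Nat.cast_smul_eq_nsmul ℝ,
            sub_self]
        rw [this, inner_zero_left, norm_sub_rev x μ]
        ring

/-- If `x` is within distance `√(2·L(C)/|C|) + √(A/(k·|C|))` of the centroid `μ` of `C`,
then `L(C, {x}) ≤ 5·L(C) + 2A/k`, where `L(C) = L(C, {μ})`. -/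
theorem cost_of_near_centroid_point {d : ℕ} (C : Finset (EuclideanSpace ℝ (Fin d)))
    (hC : C.Nonempty) (μ : EuclideanSpace ℝ (Fin d))
    (hμ : μ = (C.card : ℝ)⁻¹ • ∑ x ∈ C, x)
    (k : ℕ) (hk : 1 ≤ k) (A : ℝ) (hA : 0 ≤ A) (x : EuclideanSpace ℝ (Fin d))
    (hx : ‖x - μ‖ ≤ Real.sqrt (2 * kmeansCost C {μ} / C.card)
        + Real.sqrt (A / (k * C.card))) :
    kmeansCost C {x} ≤ 5 * kmeansCost C {μ} + 2 * A / k := by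
  have hnpos : (0 : ℝ) < C.card := by exact_mod_cast Finset.card_pos.mpr hC
  have hkpos : (0 : ℝ) < k := by exact_mod_cast hk
  set L := kmeansCost C {μ} with hL
  have hLsum : L = ∑ y ∈ C, ‖y - μ‖ ^ 2 := kmeansCost_singleton C μ
  have hLnn : 0 ≤ L := by
    rw [hLsum]; exact Finset.sum_nonneg fun y _ => sq_nonneg _
  have hPA : kmeansCost C {x} = L + (C.card : ℝ) * ‖x - μ‖ ^ 2 := by
    rw [kmeansCost_singleton, hLsum]; exact parallel_axis C hC μ hμ x
  set a := Real.sqrt (2 * L / C.card)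
  set b := Real.sqrt (A / (k * C.card))
  have ha2 : a ^ 2 = 2 * L / C.card := Real.sq_sqrt (by positivity)
  have hb2 : b ^ 2 = A / (k * C.card) := Real.sq_sqrt (by positivity)
  have hxsq : ‖x - μ‖ ^ 2 ≤ 2 * (2 * L / C.card) + 2 * (A / (k * C.card)) := by
    have h1 : ‖x - μ‖ ^ 2 ≤ (a + b) ^ 2 := by
      apply pow_le_pow_left₀ (norm_nonneg _) hx
    have h2 : (a + b) ^ 2 ≤ 2 * a ^ 2 + 2 * b ^ 2 := by nlinarith [sq_nonneg (a - b)]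
    rw [ha2, hb2] at h2
    linarith
  have : (C.card : ℝ) * ‖x - μ‖ ^ 2 ≤ 4 * L + 2 * A / k := by
    have := mul_le_mul_of_nonneg_left hxsq (le_of_lt hnpos)
    have heq : (C.card : ℝ) * (2 * (2 * L / C.card) + 2 * (A / (k * C.card)))
        = 4 * L + 2 * A / k := by
      field_simp
      ring
    linarith [heq ▸ this]
  rw [hPA]
  linarith
end

section
/- Let α ≥ 1, let k ≥ 2 and t ≥ 2 be integers, and let x_1, …, x_t ∈ ℝ^d. Suppose D ≥ 0 is such that {x_1, …, x_{t−1}} can be partitioned into k−1 sets each of diameter at most D, and suppose ‖x_t − x_i‖ > √(t·α)·D for all 1 ≤ i ≤ t−1. Then for every nonempty subset S ⊆ {x_1, …, x_{t−1}}, L({x_1, …, x_t}, S) > α·L_k({x_1, …, x_t}). In particular, any α-approximate set of centers chosen from among the first t−1 points of an (α, k)-sequence must fail, so x_t must be selected. -/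
open scoped Classical

/-- `L_k(X)`: the infimum of `L(X, S)` over all sets `S` with `|S| = k`. -/
noncomputable def kmeansOpt {d : ℕ} (k : ℕ) (X : Finset (EuclideanSpace ℝ (Fin d))) : ℝ :=
  sInf {r : ℝ | ∃ S : Finset (EuclideanSpace ℝ (Fin d)), S.card = k ∧ kmeansCost X S = r}

lemma term_nonneg {d : ℕ} (y : EuclideanSpace ℝ (Fin d)) (S : Finset (EuclideanSpace ℝ (Fin d))) :
    0 ≤ sInf ((fun c => ‖y - c‖ ^ 2) '' (S : Set (EuclideanSpace ℝ (Fin d)))) :=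
  Real.sInf_nonneg (by rintro r ⟨c, _, rfl⟩; positivity)

lemma term_bdd {d : ℕ} (y : EuclideanSpace ℝ (Fin d)) (S : Finset (EuclideanSpace ℝ (Fin d))) :
    BddBelow ((fun c => ‖y - c‖ ^ 2) '' (S : Set (EuclideanSpace ℝ (Fin d)))) :=
  ⟨0, by rintro r ⟨c, _, rfl⟩; positivity⟩

lemma term_le {d : ℕ} (y c : EuclideanSpace ℝ (Fin d)) {S : Finset (EuclideanSpace ℝ (Fin d))}
    (hc : c ∈ S) :
    sInf ((fun c => ‖y - c‖ ^ 2) '' (S : Set (EuclideanSpace ℝ (Fin d)))) ≤ ‖y - c‖ ^ 2 :=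
  csInf_le (term_bdd y S) ⟨c, hc, rfl⟩

lemma cost_nonneg {d : ℕ} (X S : Finset (EuclideanSpace ℝ (Fin d))) :
    0 ≤ kmeansCost X S :=
  Finset.sum_nonneg fun y _ => term_nonneg y S

/-- If `{x_1, …, x_{t−1}}` can be partitioned into `k−1` sets of diameter at most `D`
and `‖x_t − x_i‖ > √(t·α)·D` for all `1 ≤ i ≤ t−1`, then every nonempty set of centers
`S ⊆ {x_1, …, x_{t−1}}` has `L({x_1, …, x_t}, S) > α·L_k({x_1, …, x_t})`:
an `α`-approximation must select `x_t`. -/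
theorem must_select_next_point_of_alpha_k_sequence {d : ℕ} (α : ℝ) (hα : 1 ≤ α)
    (k t : ℕ) (hk : 2 ≤ k) (ht : 2 ≤ t) (x : ℕ → EuclideanSpace ℝ (Fin d))
    (D : ℝ) (hD : 0 ≤ D)
    (hpart : ∃ G : Fin (k - 1) → Set (EuclideanSpace ℝ (Fin d)),
      (⋃ i, G i) = (((Finset.Icc 1 (t - 1)).image x : Finset (EuclideanSpace ℝ (Fin d))) :
        Set (EuclideanSpace ℝ (Fin d))) ∧
      (Pairwise fun i j => Disjoint (G i) (G j)) ∧
      ∀ i, EMetric.diam (G i) ≤ ENNReal.ofReal D)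
    (hfar : ∀ i, 1 ≤ i → i ≤ t - 1 → Real.sqrt ((t : ℝ) * α) * D < ‖x t - x i‖)
    (S : Finset (EuclideanSpace ℝ (Fin d))) (hS : S.Nonempty)
    (hSsub : S ⊆ (Finset.Icc 1 (t - 1)).image x) :
    α * kmeansOpt k ((Finset.Icc 1 t).image x) <
      kmeansCost ((Finset.Icc 1 t).image x) S := by
  classical
  obtain ⟨G, hGU, _hGdisj, hGdiam⟩ := hpart
  have htα : (0:ℝ) ≤ (t : ℝ) * α := mul_nonneg (Nat.cast_nonneg t) (le_trans zero_le_one hα)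
  have hsq : Real.sqrt ((t : ℝ) * α) * D ≥ 0 := mul_nonneg (Real.sqrt_nonneg _) hD
  have h1t : (1:ℕ) ≤ t - 1 := by omega
  -- x t ≠ x 1, hence the space is infinite
  have hne : x t ≠ x 1 := by
    intro h
    have h1 := hfar 1 le_rfl h1t
    rw [h, sub_self, norm_zero] at h1
    linarith
  haveI : Infinite (EuclideanSpace ℝ (Fin d)) :=
    Infinite.of_injective (fun r : ℝ => r • (x t - x 1))
      (smul_left_injective ℝ (sub_ne_zero.mpr hne))
  set X : Finset (EuclideanSpace ℝ (Fin d)) := (Finset.Icc 1 t).image x with hX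
  -- representatives of the groups
  let rep : Fin (k-1) → EuclideanSpace ℝ (Fin d) :=
    fun i => if h : (G i).Nonempty then h.choose else x t
  have hrep : ∀ i, (G i).Nonempty → rep i ∈ G i := by
    intro i h
    simp only [rep, dif_pos h]
    exact h.choose_spec
  let S0 : Finset (EuclideanSpace ℝ (Fin d)) :=
    insert (x t) (Finset.image rep Finset.univ)
  have hS0card : S0.card ≤ k := by
    have h1 : S0.card ≤ (Finset.image rep Finset.univ).card + 1 := Finset.card_insert_le _ _
    have h2 : (Finset.image rep Finset.univ).card ≤ k - 1 := by
      calc (Finset.image rep Finset.univ).card ≤ (Finset.univ : Finset (Fin (k-1))).card :=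
            Finset.card_image_le
        _ = k - 1 := by simp
    omega
  obtain ⟨Sstar, hsub, hcard⟩ := Infinite.exists_superset_card_eq S0 k hS0card
  have hxtS : x t ∈ Sstar := hsub (Finset.mem_insert_self _ _)
  -- cost of Sstar is at most t * D^2
  have hcostS : kmeansCost X Sstar ≤ (t : ℝ) * D ^ 2 := by
    have hterm : ∀ y ∈ X, sInf ((fun c => ‖y - c‖ ^ 2) ''
        (Sstar : Set (EuclideanSpace ℝ (Fin d)))) ≤ D ^ 2 := by
      intro y hy
      obtain ⟨j, hj, rfl⟩ := Finset.mem_image.mp hy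
      rw [Finset.mem_Icc] at hj
      by_cases hjt : j = t
      · subst hjt
        have h0 : ‖x j - x j‖ ^ 2 = (0:ℝ) := by simp
        exact (term_le (x j) (x j) hxtS).trans (by rw [h0]; positivity)
      · -- j ≤ t - 1
        have hj' : x j ∈ (⋃ i, G i) := by
          rw [hGU]
          exact Finset.mem_coe.mpr (Finset.mem_image.mpr ⟨j, Finset.mem_Icc.mpr ⟨hj.1, by omega⟩, rfl⟩)
        obtain ⟨i, hxG⟩ := Set.mem_iUnion.mp hj'
        have hGne : (G i).Nonempty := ⟨_, hxG⟩
        have hrepS : rep i ∈ Sstar :=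
          hsub (Finset.mem_insert_of_mem (Finset.mem_image.mpr ⟨i, Finset.mem_univ i, rfl⟩))
        have hdist : dist (x j) (rep i) ≤ D := by
          have hed : edist (x j) (rep i) ≤ ENNReal.ofReal D :=
            (EMetric.edist_le_diam_of_mem hxG (hrep i hGne)).trans (hGdiam i)
          exact (edist_le_ofReal hD).mp hed
        have : ‖x j - rep i‖ ≤ D := by rwa [dist_eq_norm] at hdist
        calc sInf ((fun c => ‖x j - c‖ ^ 2) '' (Sstar : Set (EuclideanSpace ℝ (Fin d))))
            ≤ ‖x j - rep i‖ ^ 2 := term_le _ _ hrepS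
          _ ≤ D ^ 2 := by nlinarith [norm_nonneg (x j - rep i)]
    calc kmeansCost X Sstar ≤ ∑ _y ∈ X, D ^ 2 := Finset.sum_le_sum hterm
      _ = X.card * D ^ 2 := by rw [Finset.sum_const, nsmul_eq_mul]
      _ ≤ (t : ℝ) * D ^ 2 := by
          have : X.card ≤ t := by
            calc X.card ≤ (Finset.Icc 1 t).card := Finset.card_image_le
              _ = t := by simp
          have hD2 : (0:ℝ) ≤ D ^ 2 := by positivity
          exact mul_le_mul_of_nonneg_right (by exact_mod_cast this) hD2
  -- hence kmeansOpt ≤ t * D^2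
  have hoptbdd : BddBelow {r : ℝ | ∃ S' : Finset (EuclideanSpace ℝ (Fin d)),
      S'.card = k ∧ kmeansCost X S' = r} := by
    refine ⟨0, ?_⟩
    rintro r ⟨S', _, rfl⟩
    exact cost_nonneg X S'
  have hopt : kmeansOpt k X ≤ (t : ℝ) * D ^ 2 :=
    (csInf_le hoptbdd ⟨Sstar, hcard, rfl⟩).trans hcostS
  -- lower bound on the cost of S
  have hxtX : x t ∈ X := Finset.mem_image.mpr ⟨t, Finset.mem_Icc.mpr ⟨by omega, le_rfl⟩, rfl⟩
  have htermS : (t : ℝ) * α * D ^ 2 <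
      sInf ((fun c => ‖x t - c‖ ^ 2) '' (S : Set (EuclideanSpace ℝ (Fin d)))) := by
    have hne' : ((fun c => ‖x t - c‖ ^ 2) '' (S : Set (EuclideanSpace ℝ (Fin d)))).Nonempty :=
      (hS.to_set).image _
    have hfin : ((fun c => ‖x t - c‖ ^ 2) '' (S : Set (EuclideanSpace ℝ (Fin d)))).Finite :=
      (S.finite_toSet).image _
    obtain ⟨c, hc, heq⟩ := hne'.csInf_mem hfin
    obtain ⟨i, hi, rfl⟩ := Finset.mem_image.mp (hSsub hc)
    rw [Finset.mem_Icc] at hi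
    have hfi := hfar i hi.1 hi.2
    have : (Real.sqrt ((t : ℝ) * α) * D) ^ 2 < ‖x t - x i‖ ^ 2 :=
      pow_lt_pow_left₀ hfi hsq (by norm_num)
    rw [mul_pow, Real.sq_sqrt htα] at this
    rw [← heq]
    exact this
  have hcostlow : sInf ((fun c => ‖x t - c‖ ^ 2) '' (S : Set (EuclideanSpace ℝ (Fin d)))) ≤
      kmeansCost X S :=
    Finset.single_le_sum (fun y _ => term_nonneg y S) hxtX
  have hαpos : (0:ℝ) < α := lt_of_lt_of_le zero_lt_one hα
  calc α * kmeansOpt k X ≤ α * ((t : ℝ) * D ^ 2) :=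
        mul_le_mul_of_nonneg_left hopt (le_of_lt hαpos)
    _ = (t : ℝ) * α * D ^ 2 := by ring
    _ < _ := lt_of_lt_of_le htermS hcostlow
end

section
/- For all positive integers n and k and any function f : {1, …, n} → {1, …, k}, the sum ∑_{t=1}^{n} 1/|{s : 1 ≤ s ≤ t and f(s) = f(t)}| is at most k·(1 + ln n). -/
/-- For any `f : {1, …, n} → {1, …, k}`, the sum over `t` of the reciprocal of the number
of indices `s ≤ t` with `f(s) = f(t)` is at most `k·(1 + ln n)`. -/
theorem harmonic_class_sum_bound (n k : ℕ) (hn : 0 < n) (hk : 0 < k) (f : ℕ → ℕ)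
    (hf : ∀ s ∈ Finset.Icc 1 n, f s ∈ Finset.Icc 1 k) :
    ∑ t ∈ Finset.Icc 1 n,
        (1 : ℝ) / ((Finset.Icc 1 t).filter (fun s => f s = f t)).card
      ≤ k * (1 + Real.log n) := by
  classical
  have hharm : ∑ i ∈ Finset.Icc 1 n, (1 : ℝ) / (i : ℝ) ≤ 1 + Real.log n := by
    calc ∑ i ∈ Finset.Icc 1 n, (1 : ℝ) / (i : ℝ)
        = ((∑ i ∈ Finset.Icc 1 n, (i : ℚ)⁻¹ : ℚ) : ℝ) := by push_cast; simp [one_div]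
      _ = ((harmonic n : ℚ) : ℝ) := by rw [harmonic_eq_sum_Icc]
      _ ≤ 1 + Real.log n := harmonic_le_one_add_log n
  have key : ∀ c ∈ Finset.Icc 1 k,
      ∑ t ∈ (Finset.Icc 1 n).filter (fun t => f t = c),
        (1 : ℝ) / ((Finset.Icc 1 t).filter (fun s => f s = f t)).card
      ≤ 1 + Real.log n := by
    intro c _
    set C := (Finset.Icc 1 n).filter (fun t => f t = c) with hC
    have hcount : ∀ t ∈ C,
        (Finset.Icc 1 t).filter (fun s => f s = f t) = C.filter (fun s => s ≤ t) := by
      intro t ht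
      rw [hC, Finset.mem_filter, Finset.mem_Icc] at ht
      ext s
      simp only [Finset.mem_filter, Finset.mem_Icc, hC, ht.2]
      constructor
      · rintro ⟨⟨h1, h2⟩, h3⟩; exact ⟨⟨⟨h1, h2.trans ht.1.2⟩, h3⟩, h2⟩
      · rintro ⟨⟨⟨h1, _⟩, h3⟩, h2⟩; exact ⟨⟨h1, h2⟩, h3⟩
    set r : ℕ → ℕ := fun t => (C.filter (fun s => s ≤ t)).card with hr
    have hinj : Set.InjOn r C := by
      have hmono : ∀ a ∈ C, ∀ b ∈ C, a < b → r a < r b := by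
        intro a ha b hb hab
        apply Finset.card_lt_card
        constructor
        · intro x hx
          rw [Finset.mem_filter] at hx ⊢
          exact ⟨hx.1, hx.2.trans hab.le⟩
        · intro hsub
          have := hsub (Finset.mem_filter.mpr ⟨hb, le_refl b⟩)
          rw [Finset.mem_filter] at this
          omega
      intro a ha b hb hab
      rcases lt_trichotomy a b with h | h | h
      · exact absurd hab (hmono a ha b hb h).ne
      · exact h
      · exact absurd hab.symm (hmono b hb a ha h).ne
    have hrange : ∀ t ∈ C, r t ∈ Finset.Icc 1 n := by
      intro t ht
      rw [Finset.mem_Icc]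
      constructor
      · exact Finset.card_pos.mpr ⟨t, Finset.mem_filter.mpr ⟨ht, le_refl t⟩⟩
      · calc r t ≤ C.card := Finset.card_le_card (Finset.filter_subset _ _)
          _ ≤ (Finset.Icc 1 n).card := Finset.card_le_card (Finset.filter_subset _ _)
          _ = n := by rw [Nat.card_Icc]; omega
    calc ∑ t ∈ C, (1 : ℝ) / ((Finset.Icc 1 t).filter (fun s => f s = f t)).card
        = ∑ t ∈ C, (1 : ℝ) / (r t : ℝ) := by
          refine Finset.sum_congr rfl fun t ht => ?_
          rw [hcount t ht]
      _ = ∑ i ∈ C.image r, (1 : ℝ) / (i : ℝ) := by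
          rw [Finset.sum_image]
          exact fun a ha b hb => hinj ha hb
      _ ≤ ∑ i ∈ Finset.Icc 1 n, (1 : ℝ) / (i : ℝ) := by
          apply Finset.sum_le_sum_of_subset_of_nonneg
          · intro i hi
            obtain ⟨t, ht, rfl⟩ := Finset.mem_image.mp hi
            exact hrange t ht
          · intro i _ _; positivity
      _ ≤ 1 + Real.log n := hharm
  calc ∑ t ∈ Finset.Icc 1 n,
        (1 : ℝ) / ((Finset.Icc 1 t).filter (fun s => f s = f t)).card
      = ∑ c ∈ Finset.Icc 1 k, ∑ t ∈ (Finset.Icc 1 n).filter (fun t => f t = c),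
          (1 : ℝ) / ((Finset.Icc 1 t).filter (fun s => f s = f t)).card :=
        (Finset.sum_fiberwise_of_maps_to hf _).symm
    _ ≤ ∑ c ∈ Finset.Icc 1 k, (1 + Real.log n) := Finset.sum_le_sum key
    _ = k * (1 + Real.log n) := by
        rw [Finset.sum_const, Nat.card_Icc, nsmul_eq_mul, Nat.add_sub_cancel]
end

section
/- Let k ≥ 2 and t ≥ 2 be integers and P > 0. Let X ⊆ ℝ^d be a finite set with |X| = t, partitioned into nonempty sets G_1, …, G_k, and suppose there are points z_i ∈ G_i such that ‖x − z_i‖ ≤ 4P for all x ∈ G_i and ‖z_i − z_j‖ > 4(t+2)·P for all i ≠ j. Then for every finite set S ⊆ ℝ^d with |S| = k and L(X, S) = L_k(X) (i.e., S is an optimal set of k means for X), and for all x ∈ G_i and x' ∈ G_j with i ≠ j, there is no c ∈ S with ‖x − c‖ = min_{s∈S} ‖x − s‖ and ‖x' − c‖ = min_{s∈S} ‖x' − s‖; that is, points from distinct groups are never assigned to the same optimal center. -/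
/-- `min_{s∈S} ‖x − s‖`, the distance from `x` to its nearest center in `S`. -/
noncomputable def nearestDist {d : ℕ} (S : Finset (EuclideanSpace ℝ (Fin d)))
    (x : EuclideanSpace ℝ (Fin d)) : ℝ :=
  sInf ((fun s => ‖x - s‖) '' (S : Set (EuclideanSpace ℝ (Fin d))))

/-- Suppose `X` (with `|X| = t`) is partitioned into nonempty groups `G_1, …, G_k` with
points `z_i ∈ G_i` such that each group lies within `4P` of its `z_i` and
`‖z_i − z_j‖ > 4(t+2)P` for `i ≠ j`. Then in any optimal `k`-means solution `S` for `X`,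
points from distinct groups are never assigned to the same optimal center. -/
theorem optimal_centers_separate_groups {d : ℕ} (k t : ℕ) (hk : 2 ≤ k) (ht : 2 ≤ t)
    (P : ℝ) (hP : 0 < P) (X : Finset (EuclideanSpace ℝ (Fin d))) (hXcard : X.card = t)
    (G : Fin k → Finset (EuclideanSpace ℝ (Fin d))) (hGne : ∀ i, (G i).Nonempty)
    (hGdisj : Pairwise fun i j => Disjoint (G i) (G j))
    (hGunion : (⋃ i, ((G i : Set (EuclideanSpace ℝ (Fin d))))) =
      (X : Set (EuclideanSpace ℝ (Fin d))))
    (z : Fin k → EuclideanSpace ℝ (Fin d)) (hz : ∀ i, z i ∈ G i)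
    (hznear : ∀ i, ∀ x ∈ G i, ‖x - z i‖ ≤ 4 * P)
    (hzfar : ∀ i j, i ≠ j → 4 * ((t : ℝ) + 2) * P < ‖z i - z j‖)
    (S : Finset (EuclideanSpace ℝ (Fin d))) (hScard : S.card = k)
    (hopt : kmeansCost X S = kmeansOpt k X)
    (i j : Fin k) (hij : i ≠ j) (x x' : EuclideanSpace ℝ (Fin d))
    (hx : x ∈ G i) (hx' : x' ∈ G j) :
    ¬ ∃ c ∈ S, ‖x - c‖ = nearestDist S x ∧ ‖x' - c‖ = nearestDist S x' := by
  classical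
  rintro ⟨c₀, hc₀S, hxc₀, hx'c₀⟩
  have htR : (2 : ℝ) ≤ (t : ℝ) := by exact_mod_cast ht
  -- basic facts about the cost terms
  have hterm_nonneg : ∀ (S' : Finset (EuclideanSpace ℝ (Fin d))), S'.Nonempty →
      ∀ y : EuclideanSpace ℝ (Fin d),
      0 ≤ sInf ((fun c => ‖y - c‖ ^ 2) '' (S' : Set (EuclideanSpace ℝ (Fin d)))) := by
    intro S' hS' y
    apply le_csInf (hS'.to_set.image _)
    rintro r ⟨s, hs, rfl⟩
    positivity
  have hterm_le : ∀ (S' : Finset (EuclideanSpace ℝ (Fin d))) (y s : EuclideanSpace ℝ (Fin d)),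
      s ∈ S' → sInf ((fun c => ‖y - c‖ ^ 2) '' (S' : Set (EuclideanSpace ℝ (Fin d)))) ≤ ‖y - s‖ ^ 2 := by
    intro S' y s hs
    exact csInf_le ((S'.finite_toSet.image _).bddBelow) ⟨s, hs, rfl⟩
  have hSne : S.Nonempty := Finset.card_pos.mp (by omega)
  have hmemX : ∀ (m : Fin k) (y : EuclideanSpace ℝ (Fin d)), y ∈ G m → y ∈ X := by
    intro m y hy
    have : y ∈ ⋃ i, ((G i : Set (EuclideanSpace ℝ (Fin d)))) := Set.mem_iUnion.2 ⟨m, hy⟩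
    rw [hGunion] at this
    exact_mod_cast this
  have hgroup : ∀ y ∈ X, ∃ m, y ∈ G m := by
    intro y hy
    have : y ∈ ⋃ i, ((G i : Set (EuclideanSpace ℝ (Fin d)))) := by
      rw [hGunion]; exact_mod_cast hy
    obtain ⟨m, hm⟩ := Set.mem_iUnion.1 this
    exact ⟨m, hm⟩
  have hzinj : Function.Injective z := by
    intro a b hab
    by_contra hne
    have := hzfar a b hne
    rw [hab, sub_self, norm_zero] at this
    nlinarith
  -- Upper bound on the optimum
  set i0 : Fin k := ⟨0, by omega⟩
  set i1 : Fin k := ⟨1, by omega⟩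
  have hi01 : i0 ≠ i1 := by simp [i0, i1, Fin.ext_iff]
  have hz01 : z i0 ≠ z i1 := fun h => hi01 (hzinj h)
  set S₀ : Finset (EuclideanSpace ℝ (Fin d)) := Finset.image z Finset.univ with hS₀def
  have hS₀card : S₀.card = k := by
    rw [hS₀def, Finset.card_image_of_injective _ hzinj, Finset.card_univ, Fintype.card_fin]
  have hS₀ne : S₀.Nonempty := Finset.card_pos.mp (by omega)
  have hzmem : ∀ m, z m ∈ S₀ := fun m => Finset.mem_image.2 ⟨m, Finset.mem_univ m, rfl⟩
  set T : Finset (EuclideanSpace ℝ (Fin d)) := {z i0, z i1} with hTdef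
  have hTX : T ⊆ X := by
    intro y hy
    rcases Finset.mem_insert.1 hy with h | h
    · exact hmemX i0 _ (h ▸ hz i0)
    · exact hmemX i1 _ ((Finset.mem_singleton.1 h) ▸ hz i1)
  have hTcard : T.card = 2 := by rw [hTdef, Finset.card_pair hz01]
  have hcostS₀ : kmeansCost X S₀ ≤ 16 * ((t : ℝ) - 2) * P ^ 2 := by
    unfold kmeansCost
    rw [← Finset.sum_sdiff hTX]
    have h1 : ∑ y ∈ T, sInf ((fun c => ‖y - c‖ ^ 2) '' (S₀ : Set (EuclideanSpace ℝ (Fin d)))) ≤ 0 := by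
      apply Finset.sum_nonpos
      intro y hy
      have : ∃ m, y = z m := by
        rcases Finset.mem_insert.1 hy with h | h
        · exact ⟨i0, h⟩
        · exact ⟨i1, Finset.mem_singleton.1 h⟩
      obtain ⟨m, rfl⟩ := this
      have := hterm_le S₀ (z m) (z m) (hzmem m)
      simpa using this
    have h2 : ∑ y ∈ X \ T, sInf ((fun c => ‖y - c‖ ^ 2) '' (S₀ : Set (EuclideanSpace ℝ (Fin d)))) ≤
        ((t : ℝ) - 2) * (16 * P ^ 2) := by
      have hcard : ((X \ T).card : ℝ) = (t : ℝ) - 2 := by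
        rw [Finset.card_sdiff_of_subset hTX, hTcard, hXcard, Nat.cast_sub ht]
        norm_num
      calc ∑ y ∈ X \ T, sInf ((fun c => ‖y - c‖ ^ 2) '' (S₀ : Set (EuclideanSpace ℝ (Fin d))))
          ≤ ∑ _y ∈ X \ T, (16 * P ^ 2) := by
            apply Finset.sum_le_sum
            intro y hy
            obtain ⟨m, hm⟩ := hgroup y (Finset.mem_sdiff.1 hy).1
            calc sInf ((fun c => ‖y - c‖ ^ 2) '' (S₀ : Set (EuclideanSpace ℝ (Fin d))))
                ≤ ‖y - z m‖ ^ 2 := hterm_le S₀ y (z m) (hzmem m)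
              _ ≤ (4 * P) ^ 2 := pow_le_pow_left₀ (norm_nonneg _) (hznear m y hm) 2
              _ = 16 * P ^ 2 := by ring
        _ = ((X \ T).card : ℝ) * (16 * P ^ 2) := by rw [Finset.sum_const, nsmul_eq_mul]
        _ = ((t : ℝ) - 2) * (16 * P ^ 2) := by rw [hcard]
    nlinarith
  have hopt_le : kmeansOpt k X ≤ 16 * ((t : ℝ) - 2) * P ^ 2 := by
    refine le_trans (csInf_le ?_ ⟨S₀, hS₀card, rfl⟩) hcostS₀
    refine ⟨0, ?_⟩
    rintro r ⟨S', hS'card, rfl⟩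
    have hS'ne : S'.Nonempty := Finset.card_pos.mp (by omega)
    exact Finset.sum_nonneg fun y _ => hterm_nonneg S' hS'ne y
  have hcostS : kmeansCost X S ≤ 16 * ((t : ℝ) - 2) * P ^ 2 := hopt ▸ hopt_le
  -- nearest centers to the z's
  set ρ : ℝ := 4 * Real.sqrt ((t : ℝ) - 2) * P with hρdef
  have hρnonneg : 0 ≤ ρ := by positivity
  have hρsq : ρ ^ 2 = 16 * ((t : ℝ) - 2) * P ^ 2 := by
    rw [hρdef]
    rw [mul_pow, mul_pow, Real.sq_sqrt (by linarith : (0:ℝ) ≤ (t : ℝ) - 2)]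
    ring
  have hρsmall : 2 * ρ < 4 * (t : ℝ) * P := by
    have h1 : Real.sqrt ((t : ℝ) - 2) < (t : ℝ) / 2 := by
      rw [Real.sqrt_lt' (by linarith)]
      nlinarith
    calc 2 * ρ = 8 * Real.sqrt ((t : ℝ) - 2) * P := by rw [hρdef]; ring
      _ < 8 * ((t : ℝ) / 2) * P := by
          apply mul_lt_mul_of_pos_right _ hP
          linarith
      _ = 4 * (t : ℝ) * P := by ring
  choose c hcS hcmin using fun m => S.exists_min_image (fun s => ‖z m - s‖) hSne
  have hcρ : ∀ m, ‖z m - c m‖ ≤ ρ := by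
    intro m
    have hterm : ‖z m - c m‖ ^ 2 ≤
        sInf ((fun s => ‖z m - s‖ ^ 2) '' (S : Set (EuclideanSpace ℝ (Fin d)))) := by
      apply le_csInf (hSne.to_set.image _)
      rintro r ⟨s, hs, rfl⟩
      exact pow_le_pow_left₀ (norm_nonneg _) (hcmin m s hs) 2
    have hsum : sInf ((fun s => ‖z m - s‖ ^ 2) '' (S : Set (EuclideanSpace ℝ (Fin d)))) ≤
        kmeansCost X S := by
      unfold kmeansCost
      exact Finset.single_le_sum (fun y _ => hterm_nonneg S hSne y) (hmemX m _ (hz m))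
    have h : ‖z m - c m‖ ^ 2 ≤ ρ ^ 2 := by rw [hρsq]; linarith
    nlinarith [norm_nonneg (z m - c m)]
  have hcinj : Function.Injective c := by
    intro a b hab
    by_contra hne
    have h1 := hzfar a b hne
    have h2 : ‖z a - z b‖ ≤ ‖z a - c a‖ + ‖c b - z b‖ := by
      rw [← hab]; exact norm_sub_le_norm_sub_add_norm_sub _ _ _
    have h3 : ‖c b - z b‖ = ‖z b - c b‖ := norm_sub_rev _ _
    have := hcρ a; have := hcρ b
    nlinarith
  have hcsurj : ∀ s ∈ S, ∃ m, c m = s := by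
    intro s hs
    have himg : Finset.image c Finset.univ = S := by
      apply Finset.eq_of_subset_of_card_le
      · intro y hy
        obtain ⟨m, _, rfl⟩ := Finset.mem_image.1 hy
        exact hcS m
      · rw [Finset.card_image_of_injective _ hcinj, Finset.card_univ, Fintype.card_fin, hScard]
    rw [← himg] at hs
    obtain ⟨m, _, hm⟩ := Finset.mem_image.1 hs
    exact ⟨m, hm⟩
  have hnd_le : ∀ (y s : EuclideanSpace ℝ (Fin d)), s ∈ S → nearestDist S y ≤ ‖y - s‖ := by
    intro y s hs
    exact csInf_le ((S.finite_toSet.image _).bddBelow) ⟨s, hs, rfl⟩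
  -- the main assignment claim
  obtain ⟨m, hm⟩ := hcsurj c₀ hc₀S
  have hmain : ∀ (i' : Fin k) (y : EuclideanSpace ℝ (Fin d)), y ∈ G i' →
      ‖y - c₀‖ = nearestDist S y → m = i' := by
    intro i' y hy hyc₀
    by_contra hne
    have hfar := hzfar i' m (fun h => hne h.symm)
    have h1 : ‖y - c₀‖ ≤ 4 * P + ρ := by
      calc ‖y - c₀‖ = nearestDist S y := hyc₀
        _ ≤ ‖y - c i'‖ := hnd_le y (c i') (hcS i')
        _ ≤ ‖y - z i'‖ + ‖z i' - c i'‖ := norm_sub_le_norm_sub_add_norm_sub _ _ _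
        _ ≤ 4 * P + ρ := add_le_add (hznear i' y hy) (hcρ i')
    have h2 : ‖z i' - z m‖ ≤ ‖z i' - y‖ + ‖y - c₀‖ + ‖c₀ - z m‖ := by
      calc ‖z i' - z m‖ ≤ ‖z i' - c₀‖ + ‖c₀ - z m‖ := norm_sub_le_norm_sub_add_norm_sub _ _ _
        _ ≤ (‖z i' - y‖ + ‖y - c₀‖) + ‖c₀ - z m‖ :=
            add_le_add_left (norm_sub_le_norm_sub_add_norm_sub _ _ _) _
    have h3 : ‖z i' - y‖ = ‖y - z i'‖ := norm_sub_rev _ _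
    have h4 : ‖c₀ - z m‖ = ‖z m - c m‖ := by rw [← hm, norm_sub_rev]
    have h5 := hznear i' y hy
    have h6 := hcρ m
    nlinarith
  exact hij ((hmain i x hx hxc₀) ▸ hmain j x' hx' hx'c₀)
end

section
/- Let X ⊆ X' ⊆ ℝ^d be finite sets, let k ≥ 1 be an integer, and let 0 ≤ P ≤ P'. Suppose X is partitioned into sets C_1, …, C_k with points z_i ∈ ℝ^d such that ‖x − z_i‖ ≤ 4P for all x ∈ C_i; suppose X' is partitioned into sets C'_1, …, C'_k with points w_j ∈ ℝ^d such that ‖x − w_j‖ ≤ 4P' for all x ∈ C'_j; and suppose ‖w_a − w_b‖ > 16·P' for all a ≠ b. Then the earlier clusters nest into the later ones: for every i there exists j with C_i ⊆ C'_j. -/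
/-- Clusters nest: if `X ⊆ X'`, `X` is partitioned into `C_1, …, C_k` each within `4P` of a
point `z_i`, `X'` is partitioned into `C'_1, …, C'_k` each within `4P'` of a point `w_j`,
`P ≤ P'`, and the `w_j` are pairwise more than `16P'` apart, then every `C_i` is contained
in some `C'_j`. -/
theorem clusters_nest {d : ℕ} (X X' : Set (EuclideanSpace ℝ (Fin d))) (hXX' : X ⊆ X')
    (k : ℕ) (hk : 1 ≤ k) (P P' : ℝ) (hP : 0 ≤ P) (hPP' : P ≤ P')
    (C : Fin k → Set (EuclideanSpace ℝ (Fin d)))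
    (hCu : (⋃ i, C i) = X) (hCd : Pairwise fun i j => Disjoint (C i) (C j))
    (z : Fin k → EuclideanSpace ℝ (Fin d)) (hz : ∀ i, ∀ x ∈ C i, ‖x - z i‖ ≤ 4 * P)
    (C' : Fin k → Set (EuclideanSpace ℝ (Fin d)))
    (hC'u : (⋃ j, C' j) = X') (hC'd : Pairwise fun i j => Disjoint (C' i) (C' j))
    (w : Fin k → EuclideanSpace ℝ (Fin d)) (hw : ∀ j, ∀ x ∈ C' j, ‖x - w j‖ ≤ 4 * P')
    (hwfar : ∀ a b, a ≠ b → 16 * P' < ‖w a - w b‖) :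
    ∀ i, ∃ j, C i ⊆ C' j := by
  intro i
  rcases Set.eq_empty_or_nonempty (C i) with h | ⟨x0, hx0⟩
  · exact ⟨⟨0, hk⟩, by simp [h]⟩
  have hx0X' : x0 ∈ X' := hXX' (hCu ▸ Set.mem_iUnion.2 ⟨i, hx0⟩)
  rw [← hC'u] at hx0X'
  obtain ⟨j, hj⟩ := Set.mem_iUnion.1 hx0X'
  refine ⟨j, fun x hx => ?_⟩
  have hxX' : x ∈ X' := hXX' (hCu ▸ Set.mem_iUnion.2 ⟨i, hx⟩)
  rw [← hC'u] at hxX'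
  obtain ⟨j', hj'⟩ := Set.mem_iUnion.1 hxX'
  rcases eq_or_ne j' j with rfl | hne
  · exact hj'
  exfalso
  have h1 : ‖x - x0‖ ≤ 8 * P' := by
    have := hz i x hx
    have := hz i x0 hx0
    have h := norm_sub_le_norm_sub_add_norm_sub x (z i) x0
    rw [norm_sub_rev (z i) x0] at h
    linarith
  have h2 := hw j' x hj'
  have h3 := hw j x0 hj
  have h4 : ‖w j' - w j‖ ≤ ‖w j' - x‖ + ‖x - x0‖ + ‖x0 - w j‖ := by
    have := norm_sub_le_norm_sub_add_norm_sub (w j') x (w j)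
    have := norm_sub_le_norm_sub_add_norm_sub x x0 (w j)
    linarith
  rw [norm_sub_rev (w j') x] at h4
  have := hwfar j' j hne
  linarith
end
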